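/- arXiv:math/0603349 — 3 statements merged into one kernel-verified Lean document; each statement's English description precedes it below -/
import Mathlib

section
/- Let X₁,...,X_N be i.i.d. real random variables with |X_i| ≤ M a.s., and let 0 < β < N/M. Then E[exp(∑_{i=1}^N log(1 − (β/N)X_i))] = (1 − (β/N)E[X])^N, and consequently for any δ > 0, with probability at least 1 − δ: E[X] ≤ (N/β)·(1 − exp((1/N)∑_{i=1}^N log(1 − (β/N)X_i) − (log(1/δ))/N)). -/
open MeasureTheory

theorem pi_integral_pow_aux {E : Type*} [MeasurableSpace E] (P : Measure E) [SigmaFinite P]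
    (g : E → ℝ) (N : ℕ) :
    (∫ ω : Fin N → E, ∏ i, g (ω i) ∂(Measure.pi fun _ : Fin N => P))
      = (∫ x, g x ∂P) ^ N := by
  letI : MeasureSpace E := ⟨P⟩
  haveI : SigmaFinite (volume : Measure E) := ‹_›
  have h := MeasureTheory.integral_fintype_prod_eq_pow (𝕜 := ℝ) (ι := Fin N) g (μ := P)
  simpa [MeasureTheory.volume_pi, Fintype.card_fin] using h

theorem pi_integrable_prod_aux {E : Type*} [MeasurableSpace E] (P : Measure E) [SigmaFinite P]
    (g : E → ℝ) (N : ℕ) (hg : Integrable g P) :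
    Integrable (fun ω : Fin N → E => ∏ i, g (ω i)) (Measure.pi fun _ : Fin N => P) := by
  letI : MeasureSpace E := ⟨P⟩
  haveI : SigmaFinite (volume : Measure E) := ‹_›
  have h := MeasureTheory.Integrable.fintype_prod (𝕜 := ℝ) (ι := Fin N) (f := fun _ => g)
    (fun _ => hg)
  simpa [MeasureTheory.volume_pi] using h

/-- Product formula `E[exp(∑ log(1 - (β/N)X_i))] = (1 - (β/N)E[X])^N` for i.i.d. bounded
variables, and the resulting high-probability upper confidence bound on `E[X]`. -/
theorem chernoff_product_formula_and_upper_bound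
    (P : Measure ℝ) [IsProbabilityMeasure P]
    (M : ℝ) (hM : 0 < M) (hbound : ∀ᵐ x ∂P, |x| ≤ M)
    (hint : Integrable (fun x : ℝ => x) P)
    (N : ℕ) (hN : 0 < N) (β : ℝ) (hβ0 : 0 < β) (hβ : β < N / M) :
    (∫ ω : Fin N → ℝ,
        Real.exp (∑ i, Real.log (1 - (β / N) * ω i))
        ∂(Measure.pi fun _ : Fin N => P))
      = (1 - (β / N) * ∫ x, x ∂P) ^ N ∧
    ∀ δ : ℝ, 0 < δ →
      (Measure.pi fun _ : Fin N => P)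
        {ω : Fin N → ℝ |
          (∫ x, x ∂P) ≤ ((N : ℝ) / β) *
            (1 - Real.exp ((1 / (N : ℝ)) * ∑ i, Real.log (1 - (β / N) * ω i)
                - Real.log (1 / δ) / N))}
        ≥ 1 - ENNReal.ofReal δ := by
  have hNR : (0 : ℝ) < N := by exact_mod_cast hN
  set c : ℝ := β / N with hc_def
  have hc : 0 < c := div_pos hβ0 hNR
  have hβM : β * M < N := (lt_div_iff₀ hM).mp hβ
  have hcM : c * M < 1 := by
    rw [hc_def, div_mul_eq_mul_div, div_lt_one hNR]; exact hβM
  set g : ℝ → ℝ := fun x => Real.exp (Real.log (1 - c * x)) with hg_def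
  have hgmeas : Measurable g :=
    (Real.measurable_log.comp (measurable_const.sub (measurable_id.const_mul c))).exp
  have hpos : ∀ x : ℝ, |x| ≤ M → 0 < 1 - c * x := by
    intro x hx
    have h1 : c * x ≤ c * M := mul_le_mul_of_nonneg_left (le_of_abs_le hx) hc.le
    linarith
  have hgeq : g =ᵐ[P] fun x => 1 - c * x := by
    filter_upwards [hbound] with x hx
    simp [hg_def, Real.exp_log (hpos x hx)]
  have hgint : Integrable g P := by
    refine Integrable.mono' (integrable_const (1 + c * M)) hgmeas.aestronglyMeasurable ?_
    filter_upwards [hbound] with x hx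
    have h1 : 0 < 1 - c * x := hpos x hx
    have h2 : 1 - c * x ≤ 1 + c * M := by
      have h3 : -M ≤ x := neg_le_of_abs_le hx
      nlinarith
    have : g x = 1 - c * x := by simp [hg_def, Real.exp_log h1]
    rw [Real.norm_eq_abs, this, abs_of_pos h1]
    exact h2
  have hintg : ∫ x, g x ∂P = 1 - c * ∫ x, x ∂P := by
    rw [integral_congr_ae hgeq, integral_sub (integrable_const 1) (hint.const_mul c)]
    rw [MeasureTheory.integral_const_mul]
    simp
  set m : ℝ := 1 - c * ∫ x, x ∂P with hm_def
  have hEx : ∫ x, x ∂P ≤ M := by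
    have := integral_mono_ae hint (integrable_const M)
      (by filter_upwards [hbound] with x hx; exact le_of_abs_le hx)
    simpa using this
  have hm : 0 < m := by
    have : c * ∫ x, x ∂P ≤ c * M := mul_le_mul_of_nonneg_left hEx hc.le
    rw [hm_def]; linarith
  have hYeq : ∀ ω : Fin N → ℝ, Real.exp (∑ i, Real.log (1 - c * ω i)) = ∏ i, g (ω i) := by
    intro ω; rw [Real.exp_sum]
  have part1 : (∫ ω : Fin N → ℝ, Real.exp (∑ i, Real.log (1 - c * ω i))
      ∂(Measure.pi fun _ : Fin N => P)) = m ^ N := by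
    simp_rw [hYeq]
    rw [pi_integral_pow_aux P g N, hintg]
  refine ⟨part1, ?_⟩
  intro δ hδ
  set μ := (Measure.pi fun _ : Fin N => P) with hμ_def
  set L : ℝ := Real.log (1 / δ) with hL_def
  set t : ℝ := m ^ N / δ with ht_def
  have hmN : 0 < m ^ N := pow_pos hm N
  have ht : 0 < t := div_pos hmN hδ
  have hSmeas : Measurable fun ω : Fin N → ℝ => ∑ i, Real.log (1 - c * ω i) :=
    Finset.measurable_sum _ fun i _ =>
      Real.measurable_log.comp (measurable_const.sub (show Measurable fun ω : Fin N → ℝ => c * ω i by fun_prop))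
  have hset : {ω : Fin N → ℝ |
        (∫ x, x ∂P) ≤ ((N : ℝ) / β) *
          (1 - Real.exp ((1 / (N : ℝ)) * ∑ i, Real.log (1 - c * ω i) - L / N))}
      = {ω : Fin N → ℝ | Real.exp (∑ i, Real.log (1 - c * ω i)) ≤ t} := by
    ext ω
    simp only [Set.mem_setOf_eq]
    set S : ℝ := ∑ i, Real.log (1 - c * ω i) with hS_def
    have hNβ : (N : ℝ) / β = c⁻¹ := by rw [hc_def]; field_simp
    rw [hNβ]
    constructor
    · intro h
      have h1 : c * (∫ x, x ∂P) ≤ 1 - Real.exp (1 / (N : ℝ) * S - L / N) := by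
        have := mul_le_mul_of_nonneg_left h hc.le
        rwa [mul_inv_cancel_left₀ hc.ne'] at this
      have h2 : Real.exp (1 / (N : ℝ) * S - L / N) ≤ m := by rw [hm_def]; linarith
      have h3 : 1 / (N : ℝ) * S - L / N ≤ Real.log m :=
        (Real.le_log_iff_exp_le hm).mpr h2
      have h4 : S ≤ (N : ℝ) * Real.log m + L := by
        have := mul_le_mul_of_nonneg_left h3 hNR.le
        have e1 : (N : ℝ) * (1 / (N : ℝ) * S - L / N) = S - L := by field_simp
        rw [e1] at this
        linarith
      have h5 : Real.exp S ≤ Real.exp ((N : ℝ) * Real.log m + L) := Real.exp_le_exp.mpr h4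
      have hexp_t : Real.exp ((N : ℝ) * Real.log m + L) = t := by
        rw [Real.exp_add, mul_comm, Real.exp_nat_mul, Real.exp_log hm, hL_def,
          Real.exp_log (by positivity : (0:ℝ) < 1 / δ), ht_def]
        ring
      rw [← hexp_t]
      exact h5
    · intro h
      have hexp_t : Real.exp ((N : ℝ) * Real.log m + L) = t := by
        rw [Real.exp_add, mul_comm, Real.exp_nat_mul, Real.exp_log hm, hL_def,
          Real.exp_log (by positivity : (0:ℝ) < 1 / δ), ht_def]
        ring
      have h5 : Real.exp S ≤ Real.exp ((N : ℝ) * Real.log m + L) := by rw [hexp_t]; exact h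
      have h4 : S ≤ (N : ℝ) * Real.log m + L := Real.exp_le_exp.mp h5
      have h3 : 1 / (N : ℝ) * S - L / N ≤ Real.log m := by
        have e2 : 1 / (N : ℝ) * S - L / N = (S - L) / N := by ring
        rw [e2, div_le_iff₀ hNR]
        nlinarith
      have h2 : Real.exp (1 / (N : ℝ) * S - L / N) ≤ m :=
        (Real.le_log_iff_exp_le hm).mp h3
      have h1 : c * (∫ x, x ∂P) ≤ 1 - Real.exp (1 / (N : ℝ) * S - L / N) := by
        rw [hm_def] at h2; linarith
      calc (∫ x, x ∂P) = c⁻¹ * (c * (∫ x, x ∂P)) := by field_simp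
        _ ≤ c⁻¹ * (1 - Real.exp (1 / (N : ℝ) * S - L / N)) :=
            mul_le_mul_of_nonneg_left h1 (inv_nonneg.mpr hc.le)
  rw [hset, ge_iff_le]
  set A := {ω : Fin N → ℝ | Real.exp (∑ i, Real.log (1 - c * ω i)) ≤ t} with hA_def
  have hAmeas : MeasurableSet A := measurableSet_le hSmeas.exp measurable_const
  have hYint : Integrable (fun ω : Fin N → ℝ => Real.exp (∑ i, Real.log (1 - c * ω i))) μ := by
    simp_rw [hYeq]
    exact pi_integrable_prod_aux P g N hgint
  have markov := mul_meas_ge_le_integral_of_nonneg (μ := μ)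
    (ae_of_all _ fun ω => (Real.exp_pos _).le) hYint t
  rw [part1] at markov
  have htoReal : (μ {ω | t ≤ Real.exp (∑ i, Real.log (1 - c * ω i))}).toReal ≤ δ := by
    have h1 : (μ {ω | t ≤ Real.exp (∑ i, Real.log (1 - c * ω i))}).toReal ≤ m ^ N / t :=
      (le_div_iff₀' ht).mpr markov
    have h2 : m ^ N / t = δ := by rw [ht_def]; field_simp
    linarith
  have hcompl : μ Aᶜ ≤ ENNReal.ofReal δ := by
    have hsub : Aᶜ ⊆ {ω | t ≤ Real.exp (∑ i, Real.log (1 - c * ω i))} := by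
      intro ω hω
      simp only [hA_def, Set.mem_compl_iff, Set.mem_setOf_eq, not_le] at hω
      exact le_of_lt hω
    calc μ Aᶜ ≤ μ {ω | t ≤ Real.exp (∑ i, Real.log (1 - c * ω i))} := measure_mono hsub
      _ ≤ ENNReal.ofReal δ := by
          rw [← ENNReal.ofReal_toReal (measure_ne_top μ _)]
          exact ENNReal.ofReal_le_ofReal htoReal
  haveI : IsProbabilityMeasure μ := by
    rw [hμ_def]; infer_instance
  have hAc : μ Aᶜ = 1 - μ A := prob_compl_eq_one_sub hAmeas
  calc (1 : ENNReal) - ENNReal.ofReal δ ≤ 1 - μ Aᶜ := tsub_le_tsub le_rfl hcompl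
    _ = 1 - (1 - μ A) := by rw [hAc]
    _ = μ A := ENNReal.sub_sub_cancel ENNReal.one_ne_top prob_le_one
end

section
/- Let (f_k)_{k=1}^m be orthogonal elements of a Hilbert space with ‖f_k‖² = D_k > 0, let a_k ∈ ℝ and β_k ≥ 0, and let C_k = {g : ‖Π_{M_k}g − a_k f_k‖² ≤ β_k} where M_k = span(f_k). Then the sets C_k are mutually 'orthogonal' in the sense that Π_{C_σ(m)}···Π_{C_σ(1)} 0 is the same for every permutation σ of {1,...,m}, and equals Π_{C_1 ∩ ... ∩ C_m} 0. -/
open scoped RealInnerProductSpace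

lemma clamp_mem {b r c : ℝ} (hr : 0 ≤ r) :
    |max (b - r) (min c (b + r)) - b| ≤ r := by
  rw [abs_le]
  constructor
  · have := le_max_left (b - r) (min c (b + r)); linarith
  · have h1 : max (b - r) (min c (b + r)) ≤ b + r :=
      max_le (by linarith) (min_le_right _ _)
    linarith

lemma clamp_nearest {b r c z : ℝ} (hz : |z - b| ≤ r) :
    (max (b - r) (min c (b + r)) - c) ^ 2 ≤ (z - c) ^ 2 ∧
      (|z - c| = |max (b - r) (min c (b + r)) - c| → z = max (b - r) (min c (b + r))) := by
  have hr : 0 ≤ r := le_trans (abs_nonneg _) hz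
  rw [abs_le] at hz
  set t := max (b - r) (min c (b + r)) with ht
  rcases lt_or_ge c (b - r) with hc | hc
  · have htv : t = b - r := by
      rw [ht, min_eq_left (by linarith), max_eq_left (by linarith)]
    constructor
    · nlinarith
    · intro he
      rw [abs_of_nonneg (by nlinarith), abs_of_nonneg (by nlinarith)] at he
      linarith
  · rcases lt_or_ge (b + r) c with hc2 | hc2
    · have htv : t = b + r := by
        rw [ht, min_eq_right (by linarith), max_eq_right (by linarith)]
      constructor
      · nlinarith
      · intro he
        rw [abs_of_nonpos (by nlinarith), abs_of_nonpos (by nlinarith)] at he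
        linarith
    · have htv : t = c := by
        rw [ht, min_eq_left (by linarith), max_eq_right (by linarith)]
      constructor
      · nlinarith
      · intro he
        rw [htv, sub_self, abs_zero, abs_eq_zero, sub_eq_zero] at he
        rw [htv]; exact he

lemma abs_le_sqrt_iff {z M : ℝ} (hM : 0 ≤ M) : |z| ≤ Real.sqrt M ↔ z ^ 2 ≤ M := by
  rw [Real.le_sqrt (abs_nonneg z) hM, sq_abs]

/-- `p` is the metric projection of `x` onto `S`. -/
def IsMetricProjOn {H : Type*} [NormedAddCommGroup H] (S : Set H) (x p : H) : Prop :=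
  p ∈ S ∧ ∀ y ∈ S, ‖p - x‖ ≤ ‖y - x‖


lemma proj_slab {H : Type*} [NormedAddCommGroup H] [InnerProductSpace ℝ H]
    {f : H} {Dk b r : ℝ} (hD : 0 < Dk) (hf : ‖f‖ ^ 2 = Dk) (hr : 0 ≤ r)
    {S : Set H} (hS : S = {g : H | |⟪g, f⟫ - b| ≤ r})
    {x p : H} (h : IsMetricProjOn S x p) :
    p = x + ((max (b - r) (min ⟪x, f⟫ (b + r)) - ⟪x, f⟫) / Dk) • f := by
  have hD0 : Dk ≠ 0 := ne_of_gt hD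
  have hff : ⟪f, f⟫ = Dk := by rw [real_inner_self_eq_norm_sq, hf]
  set c := ⟪x, f⟫ with hc
  set t := max (b - r) (min c (b + r)) with htdef
  set q := x + ((t - c) / Dk) • f with hqdef
  have hqx : q - x = ((t - c) / Dk) • f := by rw [hqdef]; abel
  have hqf : ⟪q, f⟫ = t := by
    rw [hqdef, inner_add_left, real_inner_smul_left, hff, ← hc]
    field_simp
    ring
  have hqS : q ∈ S := by rw [hS]; simpa [hqf] using clamp_mem (b := b) (c := c) hr
  have hqn : ‖q - x‖ ^ 2 = (t - c) ^ 2 / Dk := by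
    rw [hqx, norm_smul, mul_pow, Real.norm_eq_abs, sq_abs, hf]
    field_simp
  set s := ⟪p - x, f⟫ / Dk with hsdef
  set w := p - x - s • f with hwdef
  have hpxw : p - x = s • f + w := by rw [hwdef]; abel
  have hwf : ⟪w, f⟫ = 0 := by
    rw [hwdef, inner_sub_left, real_inner_smul_left, hff, hsdef]
    field_simp
    ring
  have hfw : ⟪f, w⟫ = 0 := by rw [real_inner_comm]; exact hwf
  have hpn : ‖p - x‖ ^ 2 = s ^ 2 * Dk + ‖w‖ ^ 2 := by
    rw [hpxw, norm_add_sq_real, real_inner_smul_left, hfw,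
      norm_smul, mul_pow, Real.norm_eq_abs, sq_abs, hf]
    ring
  have hpf : ⟪p, f⟫ = c + s * Dk := by
    have : ⟪p - x, f⟫ = s * Dk := by rw [hsdef]; field_simp
    rw [inner_sub_left] at this
    rw [hc]; linarith
  have hpS : |(c + s * Dk) - b| ≤ r := by
    have := h.1; rw [hS] at this; rw [← hpf]; exact this
  obtain ⟨hle, heq⟩ := clamp_nearest (c := c) hpS
  have hle' : (t - c) ^ 2 ≤ (s * Dk) ^ 2 := by
    have h' : c + s * Dk - c = s * Dk := by ring
    rwa [h'] at hle
  have hmin : ‖p - x‖ ^ 2 ≤ ‖q - x‖ ^ 2 :=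
    pow_le_pow_left₀ (norm_nonneg _) (h.2 q hqS) 2
  rw [hpn, hqn] at hmin
  have hmin' : (s ^ 2 * Dk + ‖w‖ ^ 2) * Dk ≤ (t - c) ^ 2 :=
    (le_div_iff₀ hD).mp hmin
  have hw2 : ‖w‖ ^ 2 ≤ 0 := by nlinarith
  have hw0 : w = 0 := by
    have : ‖w‖ ^ 2 = 0 := le_antisymm hw2 (by positivity)
    simpa using pow_eq_zero_iff (n := 2) (by norm_num) |>.mp this
  have habs : |c + s * Dk - c| = |t - c| := by
    have h2 : (s * Dk) ^ 2 = (t - c) ^ 2 := by nlinarith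
    have : |s * Dk| = |t - c| := by
      rw [← Real.sqrt_sq_eq_abs, ← Real.sqrt_sq_eq_abs, h2]
    simpa using this
  have hst : c + s * Dk = t := heq habs
  have hs : s = (t - c) / Dk := by field_simp; linarith
  rw [hwdef, sub_eq_zero] at hw0
  rw [hqdef, ← hs]
  exact sub_eq_iff_eq_add'.mp hw0

open scoped RealInnerProductSpace in
/-- For orthogonal `f_k` and the slabs `C_k = {g : ‖Π_{span f_k} g - a_k f_k‖² ≤ β_k}`,
successive projections of `0` do not depend on the order, and the result equals the
projection of `0` onto the intersection of the `C_k`. -/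
theorem orthogonal_slabs_proj_commute
    {H : Type*} [NormedAddCommGroup H] [InnerProductSpace ℝ H] [CompleteSpace H]
    (m : ℕ) (f : Fin m → H) (D : Fin m → ℝ) (hD : ∀ k, 0 < D k)
    (hnorm : ∀ k, ‖f k‖ ^ 2 = D k)
    (horth : ∀ j k, j ≠ k → ⟪f j, f k⟫ = 0)
    (a β : Fin m → ℝ) (hβ : ∀ k, 0 ≤ β k)
    (C : Fin m → Set H)
    (hC : ∀ k, C k = {g : H | ‖(⟪g, f k⟫ / D k) • f k - (a k) • f k‖ ^ 2 ≤ β k})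
    (σ : Equiv.Perm (Fin m))
    (u v : ℕ → H) (hu0 : u 0 = 0) (hv0 : v 0 = 0)
    (hu : ∀ k : Fin m, IsMetricProjOn (C k) (u k) (u (k + 1)))
    (hv : ∀ k : Fin m, IsMetricProjOn (C (σ k)) (v k) (v (k + 1))) :
    u m = v m ∧ IsMetricProjOn (⋂ k, C k) 0 (u m) := by
  classical
  set b : Fin m → ℝ := fun k => a k * D k with hbdef
  set r : Fin m → ℝ := fun k => Real.sqrt (β k * D k) with hrdef
  have hr : ∀ k, 0 ≤ r k := fun k => Real.sqrt_nonneg _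
  have hD0 : ∀ k, D k ≠ 0 := fun k => ne_of_gt (hD k)
  have hCset : ∀ k, C k = {g : H | |⟪g, f k⟫ - b k| ≤ r k} := by
    intro k
    rw [hC k]
    ext g
    simp only [Set.mem_setOf_eq, hbdef, hrdef]
    rw [← sub_smul, norm_smul, mul_pow, Real.norm_eq_abs, sq_abs, hnorm k,
      abs_le_sqrt_iff (mul_nonneg (hβ k) (hD k).le)]
    constructor
    · intro h
      have h2 : (⟪g, f k⟫ / D k - a k) ^ 2 * D k * D k ≤ β k * D k :=
        mul_le_mul_of_nonneg_right h (hD k).le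
      calc (⟪g, f k⟫ - a k * D k) ^ 2
          = (⟪g, f k⟫ / D k - a k) ^ 2 * D k * D k := by field_simp [hD0 k]
        _ ≤ β k * D k := h2
    · intro h
      have h2 : (⟪g, f k⟫ / D k - a k) ^ 2 * D k * D k ≤ β k * D k := by
        calc (⟪g, f k⟫ / D k - a k) ^ 2 * D k * D k
            = (⟪g, f k⟫ - a k * D k) ^ 2 := by field_simp [hD0 k]
          _ ≤ β k * D k := h
      exact le_of_mul_le_mul_right h2 (hD k)
  set T : Fin m → ℝ := fun k => max (b k - r k) (min 0 (b k + r k)) with hTdef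
  set w : H := ∑ k, (T k / D k) • f k with hwdef
  have hwk : ∀ k, ⟪w, f k⟫ = T k := by
    intro k
    rw [hwdef, sum_inner, Finset.sum_eq_single k]
    · rw [real_inner_smul_left, real_inner_self_eq_norm_sq, hnorm k]
      field_simp [hD0 k]
    · intro j _ hjk
      rw [real_inner_smul_left, horth j k hjk, mul_zero]
    · intro hk; exact absurd (Finset.mem_univ k) hk
  -- key induction
  have key : ∀ (τ : Equiv.Perm (Fin m)) (ws : ℕ → H), ws 0 = 0 →
      (∀ k : Fin m, IsMetricProjOn (C (τ k)) (ws k) (ws (k + 1))) → ws m = w := by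
    intro τ ws hws0 hws
    have main : ∀ n, n ≤ m →
        ws n = ∑ k ∈ Finset.univ.filter (fun k : Fin m => (k : ℕ) < n),
          (T (τ k) / D (τ k)) • f (τ k) := by
      intro n
      induction n with
      | zero =>
        intro _
        simp [hws0]
      | succ n ih =>
        intro hn
        have hnm : n < m := hn
        set K : Fin m := ⟨n, hnm⟩ with hK
        have hinner : ⟪ws n, f (τ K)⟫ = 0 := by
          rw [ih (le_of_lt hnm), sum_inner]
          apply Finset.sum_eq_zero
          intro j hj
          rw [real_inner_smul_left, horth (τ j) (τ K) ?_, mul_zero]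
          intro hjk
          have hjK : j = K := τ.injective hjk
          rw [Finset.mem_filter] at hj
          rw [hjK, hK] at hj
          exact absurd hj.2 (lt_irrefl n)
        have hstep := proj_slab (hD (τ K)) (hnorm (τ K)) (hr (τ K)) (hCset (τ K)) (hws K)
        rw [hinner] at hstep
        have hstep' : ws (n + 1) = ws n + (T (τ K) / D (τ K)) • f (τ K) := by
          have hwsK : ws (↑K + 1) = ws (n + 1) := rfl
          rw [← hwsK, hstep, hTdef]
          norm_num
          rfl
        have hfil : Finset.univ.filter (fun k : Fin m => (k : ℕ) < n + 1)
            = insert K (Finset.univ.filter (fun k : Fin m => (k : ℕ) < n)) := by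
          ext j
          simp only [Finset.mem_insert, Finset.mem_filter, Finset.mem_univ, true_and]
          constructor
          · intro hj
            rcases Nat.lt_succ_iff_lt_or_eq.mp hj with h | h
            · exact Or.inr h
            · exact Or.inl (Fin.ext h)
          · rintro (rfl | hj)
            · exact Nat.lt_succ_self n
            · exact Nat.lt_succ_of_lt hj
        rw [hstep', hfil, Finset.sum_insert (by simp [hK]), ih (le_of_lt hnm)]
        rw [add_comm]
    have hm := main m le_rfl
    have hfilall : Finset.univ.filter (fun k : Fin m => (k : ℕ) < m) = Finset.univ := by
      ext j; simp [j.isLt]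
    rw [hm, hfilall, hwdef]
    exact Equiv.sum_comp τ (fun k => (T k / D k) • f k)
  have hum : u m = w := by
    refine key 1 u hu0 ?_
    intro k
    simpa using hu k
  have hvm : v m = w := key σ v hv0 hv
  refine ⟨by rw [hum, hvm], ?_⟩
  rw [hum]
  constructor
  · rw [Set.mem_iInter]
    intro k
    rw [hCset k, Set.mem_setOf_eq, hwk k, hTdef]
    exact clamp_mem (hr k)
  · intro y hy
    rw [Set.mem_iInter] at hy
    have hyk : ∀ k, |⟪y, f k⟫ - b k| ≤ r k := by
      intro k
      have := hy k
      rwa [hCset k, Set.mem_setOf_eq] at this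
    have hTmin : ∀ k, (T k) ^ 2 ≤ ⟪y, f k⟫ ^ 2 := by
      intro k
      have := (clamp_nearest (c := (0 : ℝ)) (hyk k)).1
      rw [hTdef]
      simpa using this
    have horthon : Orthonormal ℝ (fun k : Fin m => (Real.sqrt (D k))⁻¹ • f k) := by
      rw [orthonormal_iff_ite]
      intro i j
      rw [real_inner_smul_left, real_inner_smul_right]
      by_cases hij : i = j
      · subst hij
        rw [if_pos rfl, real_inner_self_eq_norm_sq, hnorm i]
        have h1 : Real.sqrt (D i) ≠ 0 := ne_of_gt (Real.sqrt_pos.mpr (hD i))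
        field_simp
        rw [Real.sq_sqrt (hD i).le]
      · rw [horth i j hij, if_neg hij]; ring
    have hbessel : ∑ k : Fin m, ⟪y, f k⟫ ^ 2 / D k ≤ ‖y‖ ^ 2 := by
      have h2 := horthon.sum_inner_products_le (s := Finset.univ) y
      refine le_trans (le_of_eq ?_) h2
      apply Finset.sum_congr rfl
      intro k _
      rw [real_inner_smul_left, Real.norm_eq_abs, sq_abs, real_inner_comm (f k) y]
      rw [mul_pow, inv_pow, Real.sq_sqrt (hD k).le]
      ring
    have hwn : ‖w‖ ^ 2 = ∑ k, (T k) ^ 2 / D k := by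
      rw [← real_inner_self_eq_norm_sq]
      nth_rewrite 2 [hwdef]
      rw [inner_sum]
      apply Finset.sum_congr rfl
      intro k _
      rw [real_inner_smul_right, hwk k]
      ring
    have hle : ‖w‖ ^ 2 ≤ ‖y‖ ^ 2 := by
      rw [hwn]
      refine le_trans (Finset.sum_le_sum ?_) hbessel
      intro k _
      have h3 := mul_le_mul_of_nonneg_right (hTmin k) (inv_nonneg.mpr (hD k).le)
      simpa [div_eq_mul_inv] using h3
    have : ‖w - 0‖ ≤ ‖y - 0‖ := by
      rw [sub_zero, sub_zero]
      have h1 := Real.sqrt_le_sqrt hle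
      rwa [Real.sqrt_sq (norm_nonneg _), Real.sqrt_sq (norm_nonneg _)] at h1
    exact this
end

section
/- Let c > 0, D > 0, β ≥ 1, and for each N ≥ 2 and each integer 1 ≤ m' ≤ N define R_N(m') = (8 m' c (1 + log(2N·N²)))/N + D (m')^{−2β} + 2 N^{−2} (N+1) c. Then with m' = ⌈(N/log N)^{1/(2β+1)}⌉ there is a constant D' = D'(c, D, β) such that R_N(m') ≤ D' (log N / N)^{2β/(2β+1)} for all N ≥ 2. -/
/-- Bias–variance optimization for the adaptive Sobolev rate: with
`R_N(m') = 8m'c(1+log(2N·N²))/N + D(m')^{-2β} + 2N^{-2}(N+1)c` and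
`m' = ⌈(N/log N)^{1/(2β+1)}⌉`, we have `R_N(m') ≤ D'(log N/N)^{2β/(2β+1)}`. -/
theorem bias_variance_tradeoff_rate
    (c D β : ℝ) (hc : 0 < c) (hD : 0 < D) (hβ : 1 ≤ β) :
    ∃ D' : ℝ, 0 < D' ∧ ∀ N : ℕ, 2 ≤ N →
      (let m' : ℕ := ⌈((N : ℝ) / Real.log N) ^ (1 / (2 * β + 1))⌉₊
       8 * (m' : ℝ) * c * (1 + Real.log (2 * N * (N : ℝ) ^ 2)) / N
         + D * (m' : ℝ) ^ (-(2 * β))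
         + 2 * (N : ℝ) ^ (-(2 : ℝ)) * ((N : ℝ) + 1) * c)
        ≤ D' * (Real.log N / N) ^ ((2 * β) / (2 * β + 1)) := by
  refine ⟨102 * c + D, by positivity, ?_⟩
  intro N hN
  dsimp only
  have hN2 : (2:ℝ) ≤ (N:ℝ) := by exact_mod_cast hN
  have hN0 : (0:ℝ) < N := by linarith
  have hN1 : (1:ℝ) ≤ N := by linarith
  set L := Real.log N with hLdef
  have hlog2pos : (0:ℝ) < Real.log 2 := Real.log_pos one_lt_two
  have hlog2d : (0.6931471803 : ℝ) < Real.log 2 := Real.log_two_gt_d9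
  have hlog2le1 : Real.log 2 ≤ 1 := by nlinarith [Real.log_two_lt_d9]
  have hlog2 : Real.log 2 ≤ L := Real.log_le_log (by norm_num) hN2
  have hL0 : (0:ℝ) < L := lt_of_lt_of_le hlog2pos hlog2
  have hLN : L ≤ N := le_trans (Real.log_le_sub_one_of_pos hN0) (by linarith)
  set t := L / (N:ℝ) with htdef
  have ht0 : 0 < t := div_pos hL0 hN0
  have hβ0 : (0:ℝ) < 2 * β + 1 := by linarith
  set γ := (2 * β) / (2 * β + 1) with hγdef
  have hγ0 : 0 < γ := div_pos (by linarith) hβ0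
  have hγ1 : γ ≤ 1 := by rw [div_le_one hβ0]; linarith
  have hNL1 : (1:ℝ) ≤ (N:ℝ) / L := (one_le_div hL0).2 hLN
  set x := ((N : ℝ) / L) ^ (1 / (2 * β + 1)) with hxdef
  have hx1 : (1:ℝ) ≤ x := Real.one_le_rpow hNL1 (by positivity)
  have hx0 : (0:ℝ) < x := lt_of_lt_of_le one_pos hx1
  set m' : ℕ := ⌈x⌉₊ with hmdef
  have hm_lo : x ≤ (m' : ℝ) := Nat.le_ceil x
  have hm_hi : (m' : ℝ) ≤ 2 * x := by
    have h := Nat.ceil_lt_add_one (le_of_lt hx0)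
    calc (m' : ℝ) ≤ x + 1 := le_of_lt h
      _ ≤ 2 * x := by linarith
  have hm0 : (0:ℝ) < m' := lt_of_lt_of_le hx0 hm_lo
  clear_value L t γ x m'
  have hNLinv : (N:ℝ) / L = t⁻¹ := by rw [htdef, inv_div]
  -- key identity 1 : t ^ γ = x * t
  have hkey1 : t ^ γ = x * t := by
    have h1 : γ = 1 + (γ - 1) := by ring
    have h2 : γ - 1 = -(1 / (2 * β + 1)) := by rw [hγdef]; field_simp; ring
    rw [h1, Real.rpow_add ht0, Real.rpow_one, h2, Real.rpow_neg ht0.le,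
      ← Real.inv_rpow ht0.le, ← hNLinv, ← hxdef]
    ring
  -- key identity 2 : x ^ (-(2β)) = t ^ γ
  have hkey2 : x ^ (-(2 * β)) = t ^ γ := by
    rw [hxdef, ← Real.rpow_mul (by positivity : (0:ℝ) ≤ (N:ℝ) / L),
      show 1 / (2 * β + 1) * -(2 * β) = -γ by rw [hγdef]; field_simp,
      hNLinv, Real.inv_rpow ht0.le, ← Real.rpow_neg_one,
      ← Real.rpow_mul ht0.le]
    ring_nf
  have htγ0 : 0 < t ^ γ := Real.rpow_pos_of_pos ht0 γ
  -- lower bound : log 2 / N ≤ t ^ γ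
  have htγ_lb : Real.log 2 / N ≤ t ^ γ := by
    have hdiv : t ^ γ = L ^ γ / (N:ℝ) ^ γ := by
      rw [htdef]; exact Real.div_rpow hL0.le hN0.le γ
    have hLγ : Real.log 2 ≤ L ^ γ := by
      calc Real.log 2 = Real.log 2 ^ (1:ℝ) := (Real.rpow_one _).symm
        _ ≤ Real.log 2 ^ γ :=
            Real.rpow_le_rpow_of_exponent_ge hlog2pos hlog2le1 hγ1
        _ ≤ L ^ γ := Real.rpow_le_rpow hlog2pos.le hlog2 hγ0.le
    have hNγ : (N:ℝ) ^ γ ≤ N := by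
      calc (N:ℝ) ^ γ ≤ (N:ℝ) ^ (1:ℝ) :=
            Real.rpow_le_rpow_of_exponent_le hN1 hγ1
        _ = N := Real.rpow_one _
    rw [hdiv]
    exact div_le_div₀ (Real.rpow_nonneg hL0.le γ) hLγ
      (Real.rpow_pos_of_pos hN0 γ) hNγ
  -- bound on the log factor
  have hNne : (N:ℝ) ≠ 0 := ne_of_gt hN0
  have heq : Real.log (2 * N * (N:ℝ) ^ 2) = Real.log 2 + L + 2 * L := by
    rw [Real.log_mul (by positivity) (by positivity),
      Real.log_mul (by norm_num) hNne, Real.log_pow, hLdef]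
    push_cast; ring
  have hlogb : 1 + Real.log (2 * N * (N:ℝ) ^ 2) ≤ 6 * L := by
    rw [heq]; nlinarith [hlog2]
  -- term 1
  have hterm1 : 8 * (m' : ℝ) * c * (1 + Real.log (2 * N * (N:ℝ) ^ 2)) / N
      ≤ 96 * c * t ^ γ := by
    have hlognn : (0:ℝ) ≤ 1 + Real.log (2 * N * (N:ℝ) ^ 2) := by
      rw [heq]; nlinarith
    have h1 : 8 * (m' : ℝ) * c * (1 + Real.log (2 * N * (N:ℝ) ^ 2)) / N
        ≤ 8 * (2 * x) * c * (6 * L) / N := by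
      gcongr <;> first | exact hc.le | linarith
    calc 8 * (m' : ℝ) * c * (1 + Real.log (2 * N * (N:ℝ) ^ 2)) / N
        ≤ 8 * (2 * x) * c * (6 * L) / N := h1
      _ = 96 * c * (x * t) := by rw [htdef]; ring
      _ = 96 * c * t ^ γ := by rw [hkey1]
  -- term 2
  have hterm2 : D * (m' : ℝ) ^ (-(2 * β)) ≤ D * t ^ γ := by
    have h1 : (m' : ℝ) ^ (-(2 * β)) ≤ x ^ (-(2 * β)) :=
      Real.rpow_le_rpow_of_nonpos hx0 hm_lo (by linarith)
    rw [← hkey2]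
    exact mul_le_mul_of_nonneg_left h1 hD.le
  -- term 3
  have hterm3 : 2 * (N:ℝ) ^ (-(2:ℝ)) * ((N:ℝ) + 1) * c ≤ 6 * c * t ^ γ := by
    have h1 : (N:ℝ) ^ (-(2:ℝ)) = ((N:ℝ) ^ 2)⁻¹ := by
      rw [Real.rpow_neg hN0.le, show (2:ℝ) = ((2:ℕ):ℝ) by norm_num,
        Real.rpow_natCast]
    have h2 : (N:ℝ) + 1 ≤ 2 * N := by linarith
    have h3 : 2 * (N:ℝ) ^ (-(2:ℝ)) * ((N:ℝ) + 1) * c ≤ 4 * c / N := by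
      rw [h1]
      have : 2 * ((N:ℝ) ^ 2)⁻¹ * ((N:ℝ) + 1) * c
          ≤ 2 * ((N:ℝ) ^ 2)⁻¹ * (2 * N) * c := by gcongr
      calc 2 * ((N:ℝ) ^ 2)⁻¹ * ((N:ℝ) + 1) * c
          ≤ 2 * ((N:ℝ) ^ 2)⁻¹ * (2 * N) * c := this
        _ = 4 * c / N := by field_simp; ring
    have h4 : 4 * c / N ≤ 6 * c * (Real.log 2 / N) := by
      have h23 : (2:ℝ) / 3 ≤ Real.log 2 := by linarith
      have h42 : (4:ℝ) * c ≤ 6 * c * Real.log 2 := by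
        calc (4:ℝ) * c = 6 * c * (2 / 3) := by ring
          _ ≤ 6 * c * Real.log 2 :=
              mul_le_mul_of_nonneg_left h23 (by positivity)
      calc 4 * c / N ≤ 6 * c * Real.log 2 / N := by gcongr
        _ = 6 * c * (Real.log 2 / N) := by ring
    have h5 : 6 * c * (Real.log 2 / N) ≤ 6 * c * t ^ γ :=
      mul_le_mul_of_nonneg_left htγ_lb (by positivity)
    linarith
  calc 8 * (m' : ℝ) * c * (1 + Real.log (2 * N * (N:ℝ) ^ 2)) / N
        + D * (m' : ℝ) ^ (-(2 * β))
        + 2 * (N:ℝ) ^ (-(2:ℝ)) * ((N:ℝ) + 1) * c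
      ≤ 96 * c * t ^ γ + D * t ^ γ + 6 * c * t ^ γ := by
        linarith
    _ = (102 * c + D) * t ^ γ := by ring
end
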